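/- Let p be a prime element of ℤ[i], and let C ⊆ ℤ[i] be an (n, p)-universal set, i.e. |C| = n+1 and C is almost uniformly distributed modulo p^k for every positive integer k. If f is a polynomial with coefficients in the fraction field of ℤ[i] of degree at most n with f(C) ⊆ ℤ[i], then for every z ∈ ℤ[i] the value f(z) can be written as a fraction a/b with a, b ∈ ℤ[i], b ≠ 0, and p does not divide b. -/

import Mathlib

open Polynomial

/-- The fraction field of the Gaussian integers. -/
abbrev FF : Type := FractionRing GaussianInt

/-- The canonical embedding of `ℤ[i]` into its fraction field. -/
noncomputable def ι : GaussianInt →+* FF := algebraMap GaussianInt FF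

/-- A polynomial with coefficients in the fraction field of `ℤ[i]` is integer-valued
if it takes values in (the image of) `ℤ[i]` at every Gaussian integer. -/
def IntegerValued (f : FF[X]) : Prop :=
  ∀ z : GaussianInt, f.eval (ι z) ∈ Set.range ι

/-- A set `M ⊆ ℤ[i]` is `n`-universal if every polynomial of degree at most `n`
with coefficients in the fraction field of `ℤ[i]` taking integer values on `M`
is integer-valued. -/
def IsNUniversal (n : ℕ) (M : Set GaussianInt) : Prop :=
  ∀ f : FF[X], f.natDegree ≤ n → (∀ c ∈ M, f.eval (ι c) ∈ Set.range ι) → IntegerValued f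


/-- `M(r mod α)`: the elements of `M` congruent to `r` modulo `α`. -/
def ResidueSet (M : Finset GaussianInt) (α r : GaussianInt) : Set GaussianInt :=
  (M : Set GaussianInt) ∩ {z | α ∣ z - r}

/-- A finite set `M ⊆ ℤ[i]` is almost uniformly distributed modulo `α` if the
cardinalities of any two residue classes of `M` modulo `α` are equal or differ by one. -/
def AlmostUnifDist (M : Finset GaussianInt) (α : GaussianInt) : Prop :=
  ∀ r s : GaussianInt,
    (ResidueSet M α r).ncard = (ResidueSet M α s).ncard ∨
    (ResidueSet M α r).ncard + 1 = (ResidueSet M α s).ncard ∨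
    (ResidueSet M α s).ncard + 1 = (ResidueSet M α r).ncard

open scoped Classical

lemma iota_inj : Function.Injective ι := IsFractionRing.injective GaussianInt FF

lemma iota_eq_zero {b : GaussianInt} : ι b = 0 ↔ b = 0 :=
  map_eq_zero_iff ι iota_inj

/-- The subring of the fraction field consisting of `p`-integral elements. -/
def pLoc (p : GaussianInt) (hp : Prime p) : Subring FF where
  carrier := {x | ∃ a b : GaussianInt, ¬ p ∣ b ∧ x = ι a / ι b}
  one_mem' := ⟨1, 1, fun h => hp.not_unit (isUnit_of_dvd_one h), by simp⟩
  zero_mem' := ⟨0, 1, fun h => hp.not_unit (isUnit_of_dvd_one h), by simp⟩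
  add_mem' := by
    rintro x y ⟨a, b, hb, rfl⟩ ⟨a', b', hb', rfl⟩
    have h1 : ι b ≠ 0 := fun h => hb (by rw [iota_eq_zero.mp h]; exact dvd_zero p)
    have h2 : ι b' ≠ 0 := fun h => hb' (by rw [iota_eq_zero.mp h]; exact dvd_zero p)
    refine ⟨a * b' + b * a', b * b', fun h => (hp.dvd_mul.mp h).elim hb hb', ?_⟩
    rw [div_add_div _ _ h1 h2, map_add, map_mul, map_mul, map_mul]
  mul_mem' := by
    rintro x y ⟨a, b, hb, rfl⟩ ⟨a', b', hb', rfl⟩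
    exact ⟨a * a', b * b', fun h => (hp.dvd_mul.mp h).elim hb hb',
      by rw [div_mul_div_comm, map_mul, map_mul]⟩
  neg_mem' := by
    rintro x ⟨a, b, hb, rfl⟩
    exact ⟨-a, b, hb, by rw [map_neg]; ring⟩

lemma residue_ncard (C : Finset GaussianInt) (α r : GaussianInt) :
    (ResidueSet C α r).ncard = (C.filter fun x => α ∣ x - r).card := by
  have : ResidueSet C α r = ↑(C.filter fun x => α ∣ x - r) := by
    ext x; simp [ResidueSet]
  rw [this, Set.ncard_coe_finset]

lemma card_le_of_aud {C : Finset GaussianInt} {q : GaussianInt}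
    (hq : AlmostUnifDist C q) {c : GaussianInt} (hc : c ∈ C) (z : GaussianInt) :
    ((C.erase c).filter fun x => q ∣ x - c).card ≤
      ((C.erase c).filter fun x => q ∣ x - z).card := by
  have hCins : C = insert c (C.erase c) := (Finset.insert_erase hc).symm
  have hNc : (C.filter fun x => q ∣ x - c).card =
      ((C.erase c).filter fun x => q ∣ x - c).card + 1 := by
    conv_lhs => rw [hCins]
    rw [Finset.filter_insert, if_pos (by simp)]
    rw [Finset.card_insert_of_notMem (fun h => (Finset.notMem_erase c C)
      (Finset.mem_of_mem_filter c h))]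
  by_cases hzc : q ∣ c - z
  · have hiff : ∀ x, (q ∣ x - c) ↔ (q ∣ x - z) := by
      intro x
      constructor
      · intro h
        have := dvd_add h hzc
        rwa [sub_add_sub_cancel] at this
      · intro h
        have := dvd_sub h hzc
        rwa [sub_sub_sub_cancel_right] at this
    rw [Finset.filter_congr (fun x _ => hiff x)]
  · have hNz : (C.filter fun x => q ∣ x - z).card =
        ((C.erase c).filter fun x => q ∣ x - z).card := by
      conv_lhs => rw [hCins]
      rw [Finset.filter_insert, if_neg hzc]
    have haud := hq z c
    rw [residue_ncard, residue_ncard] at haud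
    omega

lemma mult_eq_sum {p : GaussianInt} (hp : Prime p) {x : GaussianInt} (hx : x ≠ 0)
    {K : ℕ} (hK : multiplicity p x < K) :
    multiplicity p x = ∑ k ∈ Finset.range K, if p ^ (k + 1) ∣ x then 1 else 0 := by
  have fin : FiniteMultiplicity p x := FiniteMultiplicity.of_prime_left hp hx
  have hiff : ∀ k : ℕ, (p ^ (k + 1) ∣ x) ↔ k + 1 ≤ multiplicity p x := fun k =>
    fin.pow_dvd_iff_le_multiplicity
  calc multiplicity p x = ((Finset.range K).filter
        (fun k => p ^ (k + 1) ∣ x)).card := by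
        rw [show ((Finset.range K).filter (fun k => p ^ (k + 1) ∣ x)) =
            Finset.range (multiplicity p x) from by
          ext k; simp only [Finset.mem_filter, Finset.mem_range, hiff k]; omega]
        rw [Finset.card_range]
    _ = _ := Finset.card_filter _ _

lemma key_dvd {p : GaussianInt} (hp : Prime p) {C : Finset GaussianInt}
    (hC : ∀ k : ℕ, 0 < k → AlmostUnifDist C (p ^ k)) {c : GaussianInt} (hc : c ∈ C)
    {z : GaussianInt} (hz : z ∉ C) :
    ∃ (t : ℕ) (b : GaussianInt), ¬ p ∣ b ∧ (∏ x ∈ C.erase c, (c - x)) = p ^ t * b ∧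
      p ^ t ∣ (∏ x ∈ C.erase c, (z - x)) := by
  set E := C.erase c with hE
  have hBne : ∀ x ∈ E, c - x ≠ 0 := fun x hxE =>
    sub_ne_zero.mpr (Finset.ne_of_mem_erase hxE).symm
  have hAne : ∀ x ∈ E, z - x ≠ 0 := fun x hxE =>
    sub_ne_zero.mpr (fun h => hz (h ▸ Finset.mem_of_mem_erase hxE))
  set B := ∏ x ∈ E, (c - x) with hBdef
  set A := ∏ x ∈ E, (z - x) with hAdef
  have hB0 : B ≠ 0 := Finset.prod_ne_zero_iff.mpr hBne
  have finB : FiniteMultiplicity p B := FiniteMultiplicity.of_prime_left hp hB0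
  obtain ⟨b, hbB⟩ := pow_multiplicity_dvd p B
  refine ⟨multiplicity p B, b, ?_, hbB, ?_⟩
  · intro hdvd
    obtain ⟨d, hd⟩ := hdvd
    apply finB.not_pow_dvd_of_multiplicity_lt
      (show multiplicity p B < multiplicity p B + 1 from Nat.lt_succ_self _)
    refine ⟨d, ?_⟩
    nth_rw 1 [hbB]
    rw [hd, pow_succ]
    ring
  · -- the valuation inequality
    set m : GaussianInt → ℕ := fun x => multiplicity p (z - x) with hm
    set l : GaussianInt → ℕ := fun x => multiplicity p (c - x) with hl
    set K : ℕ := 1 + ∑ x ∈ E, (m x + l x) with hK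
    have hbound : ∀ x ∈ E, m x < K ∧ l x < K := by
      intro x hxE
      have h1 : m x + l x ≤ ∑ y ∈ E, (m y + l y) :=
        Finset.single_le_sum (f := fun y => m y + l y) (fun i _ => Nat.zero_le _) hxE
      omega
    have hsum : ∑ x ∈ E, l x ≤ ∑ x ∈ E, m x := by
      rw [Finset.sum_congr rfl (fun x hx =>
        mult_eq_sum hp (hBne x hx) (hbound x hx).2),
        Finset.sum_congr rfl (g := fun x => ∑ k ∈ Finset.range K,
          if p ^ (k + 1) ∣ z - x then 1 else 0)
          (fun x hx => mult_eq_sum hp (hAne x hx) (hbound x hx).1),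
        Finset.sum_comm, Finset.sum_comm (s := E)]
      apply Finset.sum_le_sum
      intro k _
      rw [← Finset.card_filter, ← Finset.card_filter]
      have h1 : E.filter (fun x => p ^ (k + 1) ∣ c - x) =
          E.filter (fun x => p ^ (k + 1) ∣ x - c) := by
        apply Finset.filter_congr
        intro x _
        simp [dvd_sub_comm]
      have h2 : E.filter (fun x => p ^ (k + 1) ∣ z - x) =
          E.filter (fun x => p ^ (k + 1) ∣ x - z) := by
        apply Finset.filter_congr
        intro x _
        simp [dvd_sub_comm]
      rw [h1, h2]
      exact card_le_of_aud (hC (k + 1) (Nat.succ_pos k)) hc z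
    have heB : emultiplicity p B = (∑ x ∈ E, l x : ℕ) := by
      rw [hBdef, Finset.emultiplicity_prod hp, Nat.cast_sum]
      exact Finset.sum_congr rfl (fun x hx =>
        (FiniteMultiplicity.of_prime_left hp (hBne x hx)).emultiplicity_eq_multiplicity)
    have heA : emultiplicity p A = (∑ x ∈ E, m x : ℕ) := by
      rw [hAdef, Finset.emultiplicity_prod hp, Nat.cast_sum]
      exact Finset.sum_congr rfl (fun x hx =>
        (FiniteMultiplicity.of_prime_left hp (hAne x hx)).emultiplicity_eq_multiplicity)
    have htB : (multiplicity p B : ℕ∞) = (∑ x ∈ E, l x : ℕ) := by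
      rw [← finB.emultiplicity_eq_multiplicity, heB]
    apply pow_dvd_of_le_emultiplicity
    rw [heA, htB]
    exact_mod_cast hsum

lemma mem_pLoc_iota {p : GaussianInt} (hp : Prime p) (w : GaussianInt) :
    ι w ∈ pLoc p hp :=
  ⟨w, 1, fun h => hp.not_unit (isUnit_of_dvd_one h), by simp⟩

/-- If `C` is an `(n, p)`-universal set (i.e. `|C| = n + 1` and `C` is almost uniformly
distributed modulo every power of the prime `p`) and `f` is a polynomial of degree at
most `n` taking integer values on `C`, then every value `f(z)`, `z ∈ ℤ[i]`, is a
fraction whose denominator is not divisible by `p`. -/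
theorem np_universal_denominator (n : ℕ) (p : GaussianInt) (hp : Prime p)
    (C : Finset GaussianInt) (hcard : C.card = n + 1)
    (hC : ∀ k : ℕ, 0 < k → AlmostUnifDist C (p ^ k))
    (f : FF[X]) (hdeg : f.natDegree ≤ n)
    (hvals : ∀ c ∈ C, f.eval (ι c) ∈ Set.range ι) :
    ∀ z : GaussianInt, ∃ a b : GaussianInt, b ≠ 0 ∧ ¬ p ∣ b ∧
      f.eval (ι z) = ι a / ι b := by
  intro z
  suffices h : f.eval (ι z) ∈ pLoc p hp by
    obtain ⟨a, b, hb, hx⟩ := h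
    exact ⟨a, b, fun h0 => hb (h0 ▸ dvd_zero p), hb, hx⟩
  by_cases hz : z ∈ C
  · obtain ⟨w, hw⟩ := hvals z hz
    rw [← hw]
    exact mem_pLoc_iota hp w
  -- Lagrange interpolation
  have hinj : Set.InjOn (⇑ι) ↑C := Function.Injective.injOn iota_inj
  have hdlt : f.degree < C.card := by
    rw [hcard]
    apply lt_of_le_of_lt f.degree_le_natDegree
    exact_mod_cast Nat.lt_succ_of_le hdeg
  have hf := Lagrange.eq_interpolate hinj hdlt
  have heval : f.eval (ι z) = ∑ c ∈ C, f.eval (ι c) *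
      eval (ι z) (Lagrange.basis C (⇑ι) c) := by
    conv_lhs => rw [hf]
    rw [Lagrange.interpolate_apply, eval_finset_sum]
    exact Finset.sum_congr rfl (fun c _ => by rw [eval_mul, eval_C])
  rw [heval]
  apply Subring.sum_mem
  intro c hc
  apply Subring.mul_mem
  · obtain ⟨w, hw⟩ := hvals c hc
    rw [← hw]
    exact mem_pLoc_iota hp w
  -- the basis polynomial evaluation
  have hbasis : eval (ι z) (Lagrange.basis C (⇑ι) c) =
      ι (∏ x ∈ C.erase c, (z - x)) / ι (∏ x ∈ C.erase c, (c - x)) := by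
    rw [Lagrange.basis, eval_prod]
    rw [map_prod, map_prod]
    rw [← Finset.prod_div_distrib]
    apply Finset.prod_congr rfl
    intro x _
    rw [Lagrange.basisDivisor, eval_mul, eval_C, eval_sub, eval_X, eval_C]
    rw [map_sub, map_sub]
    rw [div_eq_inv_mul]
  rw [hbasis]
  obtain ⟨t, b, hb, hBeq, hdvd⟩ := key_dvd hp hC hc hz
  obtain ⟨a, ha⟩ := hdvd
  have hpt : (ι p) ^ t ≠ 0 := pow_ne_zero t (fun h => hp.ne_zero (iota_eq_zero.mp h))
  refine ⟨a, b, hb, ?_⟩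
  rw [ha, hBeq, map_mul, map_mul, map_pow, mul_div_mul_left _ _ hpt]
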